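/- Let 1 < p < 2 and set c₁ = min{1, 2(p-1)}. Then for all vectors ξ, η ∈ ℝ^N with ξ ≠ 0, ⟨|ξ|^{p-2} ξ − |η|^{p-2} η, ξ − η⟩ ≥ c₁ · |ξ − η|² / (|ξ|^{2-p} + |η|^{2-p}). -/

import Mathlib

lemma sinh_convex : ConvexOn ℝ (Set.Ici (0:ℝ)) Real.sinh := by
  apply convexOn_of_deriv2_nonneg' (convex_Ici 0)
    Real.differentiable_sinh.differentiableOn
  · rw [Real.deriv_sinh]
    exact Real.differentiable_cosh.differentiableOn
  · intro x hx
    simp only [Function.iterate_succ, Function.iterate_zero, Function.comp_apply, id_eq]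
    rw [Real.deriv_sinh, Real.deriv_cosh]
    exact Real.sinh_nonneg_iff.2 hx

lemma sinh_smul_le (s v : ℝ) (hs0 : 0 ≤ s) (hs1 : s ≤ 1) (hv : 0 ≤ v) :
    Real.sinh (s * v) ≤ s * Real.sinh v := by
  have := sinh_convex.2 (Set.mem_Ici.2 hv) (Set.mem_Ici.2 le_rfl)
    hs0 (by linarith : (0:ℝ) ≤ 1 - s) (by ring)
  simpa [Real.sinh_zero, mul_comm] using this

lemma key_u (s u : ℝ) (hs0 : 0 ≤ s) (hs1 : s ≤ 1) (hu0 : 0 < u) (hu1 : u ≤ 1) :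
    u ^ (1-s) - u ^ (1+s) ≤ s * (1 - u^2) := by
  set v := -Real.log u with hv_def
  have hlog : Real.log u = -v := by simp [hv_def]
  have hv : 0 ≤ v := by
    have := Real.log_nonpos hu0.le hu1
    simp only [hv_def]; linarith
  have key := sinh_smul_le s v hs0 hs1 hv
  rw [Real.sinh_eq, Real.sinh_eq] at key
  have h1 : u ^ (1-s) = Real.exp (-v) * Real.exp (s*v) := by
    rw [Real.rpow_def_of_pos hu0, ← Real.exp_add]
    congr 1; rw [hlog]; ring
  have h2 : u ^ (1+s) = Real.exp (-v) * Real.exp (-(s*v)) := by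
    rw [Real.rpow_def_of_pos hu0, ← Real.exp_add]
    congr 1; rw [hlog]; ring
  have h3 : u = Real.exp (-v) := by
    rw [← Real.exp_log hu0, hlog]
  have h4 : Real.exp (-v) * Real.exp v = 1 := by rw [← Real.exp_add]; simp
  have h5 : (0:ℝ) < Real.exp (-v) := Real.exp_pos _
  rw [h1, h2, h3]
  nlinarith [key, h5, h4]


lemma key_r (p r : ℝ) (hp1 : 1 < p) (hp2 : p < 2) (hr0 : 0 < r) (hr1 : r ≤ 1) :
    r^(p-1) - r^(2-p) ≤ (1 - min 1 (2*(p-1))) * (1 - r) := by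
  rcases le_or_gt (3/2) p with h | h
  · have hmin : min 1 (2*(p-1)) = 1 := min_eq_left (by linarith)
    rw [hmin]
    have : r^(p-1) ≤ r^(2-p) :=
      Real.rpow_le_rpow_of_exponent_ge hr0 hr1 (by linarith)
    linarith
  · have hmin : min 1 (2*(p-1)) = 2*(p-1) := min_eq_right (by linarith)
    rw [hmin]
    set s := 3 - 2*p with hs
    set u := Real.sqrt r with hu
    have hu0 : 0 < u := Real.sqrt_pos.2 hr0
    have hu1 : u ≤ 1 := by
      rw [hu, show (1:ℝ) = Real.sqrt 1 by simp]
      exact Real.sqrt_le_sqrt hr1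
    have hr_eq : r = u^2 := (Real.sq_sqrt hr0.le).symm
    have e1 : r ^ (p-1) = u ^ (1-s) := by
      rw [hr_eq, ← Real.rpow_natCast u 2, ← Real.rpow_mul hu0.le]
      congr 1
      rw [hs]; push_cast; ring
    have e2 : r ^ (2-p) = u ^ (1+s) := by
      rw [hr_eq, ← Real.rpow_natCast u 2, ← Real.rpow_mul hu0.le]
      congr 1
      rw [hs]; push_cast; ring
    have hk := key_u s u (by rw [hs]; linarith) (by rw [hs]; linarith) hu0 hu1
    rw [e1, e2, hr_eq]
    calc u ^ (1-s) - u ^ (1+s) ≤ s * (1 - u^2) := hk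
      _ = (1 - 2*(p-1)) * (1 - u^2) := by rw [hs]; ring

lemma key_ab_half (p a b : ℝ) (hp1 : 1 < p) (hp2 : p < 2) (hb : 0 < b) (hab : b ≤ a) :
    (a-b) * (a^(2-p)*b^(p-1) - a^(p-1)*b^(2-p)) ≤ (1 - min 1 (2*(p-1))) * (a-b)^2 := by
  have ha : 0 < a := lt_of_lt_of_le hb hab
  set c1 := min 1 (2*(p-1)) with hc1
  have hr := key_r p (b/a) hp1 hp2 (div_pos hb ha) (div_le_one_of_le₀ hab ha.le)
  have hane : a ≠ 0 := ha.ne'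
  have haa1 : a^(2-p) * a^(p-1) = a := by
    rw [← Real.rpow_add ha]; norm_num
  have haa2 : a^(p-1) * a^(2-p) = a := by
    rw [← Real.rpow_add ha]; norm_num
  have hap1 : (0:ℝ) < a^(p-1) := Real.rpow_pos_of_pos ha _
  have hap2 : (0:ℝ) < a^(2-p) := Real.rpow_pos_of_pos ha _
  have e1 : (b/a)^(p-1) * a = a^(2-p)*b^(p-1) := by
    rw [Real.div_rpow hb.le ha.le, div_mul_eq_mul_div, div_eq_iff hap1.ne']
    linear_combination -(b^(p-1)) * haa1
  have e2 : (b/a)^(2-p) * a = a^(p-1)*b^(2-p) := by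
    rw [Real.div_rpow hb.le ha.le, div_mul_eq_mul_div, div_eq_iff hap2.ne']
    linear_combination -(b^(2-p)) * haa2
  have h2 : ((a-b)*a) * ((b/a)^(p-1) - (b/a)^(2-p)) ≤ ((a-b)*a) * ((1-c1)*(1-b/a)) :=
    mul_le_mul_of_nonneg_left hr (mul_nonneg (by linarith) ha.le)
  calc (a-b) * (a^(2-p)*b^(p-1) - a^(p-1)*b^(2-p))
      = ((a-b)*a) * ((b/a)^(p-1) - (b/a)^(2-p)) := by
        linear_combination (a-b) * e2 - (a-b) * e1
    _ ≤ ((a-b)*a) * ((1-c1)*(1-b/a)) := h2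
    _ = (1-c1)*(a-b)^2 := by field_simp


lemma key_ab (p a b : ℝ) (hp1 : 1 < p) (hp2 : p < 2) (ha : 0 < a) (hb : 0 < b) :
    min 1 (2*(p-1)) * (a-b)^2
      ≤ (a-b)^2 + (a-b)*(a^(p-1)*b^(2-p) - a^(2-p)*b^(p-1)) := by
  rcases le_total b a with hab | hab
  · have h := key_ab_half p a b hp1 hp2 hb hab
    nlinarith [h]
  · have h := key_ab_half p b a hp1 hp2 ha hab
    nlinarith [h]

lemma main_scalar (p a b t : ℝ) (hp1 : 1 < p) (hp2 : p < 2) (ha : 0 < a) (hb : 0 < b)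
    (ht : t ≤ a*b) :
    min 1 (2*(p-1)) * (a^2 + b^2 - 2*t)
      ≤ (a^(p-2)*a^2 + b^(p-2)*b^2 - (a^(p-2)+b^(p-2))*t) * (a^(2-p)+b^(2-p)) := by
  have hc : a^(p-2)*a = a^(p-1) := by
    rw [show p-1 = (p-2)+1 by ring, Real.rpow_add_one ha.ne']
  have hd : b^(p-2)*b = b^(p-1) := by
    rw [show p-1 = (p-2)+1 by ring, Real.rpow_add_one hb.ne']
  have hAA' : a^(p-1)*a^(2-p) = a := by
    rw [← Real.rpow_add ha]; norm_num
  have hBB' : b^(p-1)*b^(2-p) = b := by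
    rw [← Real.rpow_add hb]; norm_num
  have hab : (0:ℝ) < a*b := mul_pos ha hb
  rw [← mul_le_mul_iff_right₀ hab]
  have hab_rhs : (a*b)*((a^(p-2)*a^2 + b^(p-2)*b^2 - (a^(p-2)+b^(p-2))*t) * (a^(2-p)+b^(2-p)))
      = a^3*b + a*b^3 + a^2*b*(a^(p-1)*b^(2-p)) + a*b^2*(b^(p-1)*a^(2-p))
        - t*(2*(a*b) + b*(a^(p-1)*b^(2-p)) + a*(b^(p-1)*a^(2-p))) := by
    linear_combination (b*(a^(2-p)+b^(2-p))*(a^2-t))*hc + (a*(a^(2-p)+b^(2-p))*(b^2-t))*hd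
      + (b*(a^2-t))*hAA' + (a*(b^2-t))*hBB'
  rw [hab_rhs]
  have hK := key_ab p a b hp1 hp2 ha hb
  have hU : (0:ℝ) < a^(p-1)*b^(2-p) :=
    mul_pos (Real.rpow_pos_of_pos ha _) (Real.rpow_pos_of_pos hb _)
  have hV : (0:ℝ) < b^(p-1)*a^(2-p) :=
    mul_pos (Real.rpow_pos_of_pos hb _) (Real.rpow_pos_of_pos ha _)
  have hm1 : min 1 (2*(p-1)) ≤ 1 := min_le_left _ _
  have hm0 : (0:ℝ) ≤ min 1 (2*(p-1)) := le_min (by norm_num) (by linarith)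
  nlinarith [mul_le_mul_of_nonneg_left hK hab.le,
    mul_nonneg (mul_nonneg (sub_nonneg.2 ht) hb.le) hU.le,
    mul_nonneg (mul_nonneg (sub_nonneg.2 ht) ha.le) hV.le,
    mul_nonneg (mul_nonneg (sub_nonneg.2 ht) hab.le) (by linarith : (0:ℝ) ≤ 1 - min 1 (2*(p-1)))]


theorem p_monotonicity {N : ℕ} (p : ℝ) (hp1 : 1 < p) (hp2 : p < 2)
    (ξ η : EuclideanSpace ℝ (Fin N)) (hξ : ξ ≠ 0) :
    min 1 (2 * (p - 1)) * ‖ξ - η‖ ^ 2 / (‖ξ‖ ^ (2 - p) + ‖η‖ ^ (2 - p))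
      ≤ @inner ℝ _ _ ((‖ξ‖ ^ (p - 2)) • ξ - (‖η‖ ^ (p - 2)) • η) (ξ - η) := by
  have ha : (0:ℝ) < ‖ξ‖ := norm_pos_iff.2 hξ
  have hm1 : min 1 (2*(p-1)) ≤ 1 := min_le_left _ _
  have hm0 : (0:ℝ) ≤ min 1 (2*(p-1)) := le_min (by norm_num) (by linarith)
  by_cases hη : η = 0
  · subst hη
    have h0a : (‖(0 : EuclideanSpace ℝ (Fin N))‖ : ℝ) ^ (2-p) = 0 := by
      rw [norm_zero]; exact Real.zero_rpow (by linarith)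
    have h0b : (‖(0 : EuclideanSpace ℝ (Fin N))‖ : ℝ) ^ (p-2) = 0 := by
      rw [norm_zero]; exact Real.zero_rpow (by linarith)
    rw [h0a, h0b, add_zero, zero_smul, sub_zero, sub_zero,
      real_inner_smul_left, real_inner_self_eq_norm_sq,
      div_le_iff₀ (Real.rpow_pos_of_pos ha _)]
    have i0 : ‖ξ‖^(p-2) * ‖ξ‖^(2-p) = 1 := by
      rw [← Real.rpow_add ha]; norm_num
    have hsq : (0:ℝ) ≤ ‖ξ‖^2 := sq_nonneg _
    nlinarith [i0, hsq]
  · have hb : (0:ℝ) < ‖η‖ := norm_pos_iff.2 hη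
    have hD : (0:ℝ) < ‖ξ‖^(2-p) + ‖η‖^(2-p) :=
      add_pos (Real.rpow_pos_of_pos ha _) (Real.rpow_pos_of_pos hb _)
    rw [div_le_iff₀ hD]
    have hinner : @inner ℝ _ _ ((‖ξ‖ ^ (p - 2)) • ξ - (‖η‖ ^ (p - 2)) • η) (ξ - η)
        = ‖ξ‖^(p-2) * ‖ξ‖^2 + ‖η‖^(p-2) * ‖η‖^2
          - (‖ξ‖^(p-2) + ‖η‖^(p-2)) * (@inner ℝ _ _ ξ η) := by
      simp only [inner_sub_left, inner_sub_right, real_inner_smul_left,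
        real_inner_self_eq_norm_sq, real_inner_comm η ξ]
      ring
    rw [hinner, norm_sub_sq_real]
    have ht : @inner ℝ _ _ ξ η ≤ ‖ξ‖ * ‖η‖ := real_inner_le_norm ξ η
    have := main_scalar p ‖ξ‖ ‖η‖ (@inner ℝ _ _ ξ η) hp1 hp2 ha hb ht
    linarith [this]
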